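/- arXiv:0711.1852 — 5 statements merged into one kernel-verified Lean document; each statement's English description precedes it below -/
import Mathlib

section
/- (Sturm comparison) Let q₀, q₁ be continuous on an interval with q₀(x) − q₁(x) > 0 for all x, and let u_j be nontrivial real solutions of −u_j'' + q_j u_j = 0 for j = 0,1. Then between any two consecutive zeros of u₀, there is a zero of u₁. -/
open Set Filter Topology

lemma aux_diff2 {u : ℝ → ℝ} {x : ℝ} (h : ContDiffAt ℝ 2 u x) :
    HasDerivAt u (deriv u x) x ∧ HasDerivAt (deriv u) (deriv (deriv u) x) x := by
  obtain ⟨s, hs, hcd⟩ := h.contDiffOn le_rfl (by norm_num)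
  obtain ⟨t, hts, hto, hxt⟩ := mem_nhds_iff.1 hs
  have hcd' : ContDiffOn ℝ 2 u t := hcd.mono hts
  rw [show (2 : WithTop ℕ∞) = 1 + 1 by norm_num, contDiffOn_succ_iff_deriv_of_isOpen hto] at hcd'
  refine ⟨((hcd'.1 x hxt).differentiableAt (hto.mem_nhds hxt)).hasDerivAt, ?_⟩
  exact (((hcd'.2.2.differentiableOn one_ne_zero) x hxt).differentiableAt
    (hto.mem_nhds hxt)).hasDerivAt

lemma gron (q u : ℝ → ℝ) (t₀ L σ K : ℝ) (hσ : σ * σ = 1) (hK : 0 ≤ K)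
    (hu : ∀ s ∈ Icc (0:ℝ) L, ContDiffAt ℝ 2 u (t₀ + σ * s))
    (hode : ∀ s ∈ Icc (0:ℝ) L, deriv (deriv u) (t₀ + σ * s) = q (t₀ + σ * s) * u (t₀ + σ * s))
    (hbound : ∀ s ∈ Icc (0:ℝ) L, |q (t₀ + σ * s)| ≤ K)
    (h0 : u t₀ = 0) (h0' : deriv u t₀ = 0) :
    ∀ s ∈ Icc (0:ℝ) L, u (t₀ + σ * s) = 0 := by
  set γ : ℝ → ℝ := fun s => t₀ + σ * s with hγ
  have hγd : ∀ s : ℝ, HasDerivAt γ σ s := by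
    intro s
    have := ((hasDerivAt_id s).const_mul σ).const_add t₀
    rw [mul_one] at this
    exact this
  set f : ℝ → ℝ × ℝ := fun s => (u (γ s), σ * deriv u (γ s)) with hf
  set F : ℝ → ℝ × ℝ := fun s => (σ * deriv u (γ s), q (γ s) * u (γ s)) with hF
  have hfd : ∀ s ∈ Icc (0:ℝ) L, HasDerivAt f (F s) s := by
    intro s hs
    obtain ⟨h1, h2⟩ := aux_diff2 (hu s hs)
    have c1 : HasDerivAt (fun s' => u (γ s')) (deriv u (γ s) * σ) s :=
      h1.comp s (hγd s)
    have c2 : HasDerivAt (fun s' => σ * deriv u (γ s')) (σ * (deriv (deriv u) (γ s) * σ)) s :=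
      by have := h2.comp s (hγd s); exact this.const_mul σ
    have e2 : σ * (deriv (deriv u) (γ s) * σ) = q (γ s) * u (γ s) := by
      rw [hode s hs,
        show σ * (q (γ s) * u (γ s) * σ) = σ * σ * (q (γ s) * u (γ s)) from by ring, hσ, one_mul]
    convert c1.prodMk c2 using 1
    rw [hF]
    simp only [Prod.mk.injEq]
    exact ⟨mul_comm _ _, e2.symm⟩
  have hcont : ContinuousOn f (Icc 0 L) := fun s hs => ((hfd s hs).continuousAt).continuousWithinAt
  have hσ1 : |σ| = 1 := by rcases mul_self_eq_one_iff.1 hσ with h | h <;> simp [h]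
  have key : ∀ s ∈ Icc (0:ℝ) L, ‖f s‖ ≤ gronwallBound 0 (K + 1) 0 (s - 0) := by
    apply norm_le_gronwallBound_of_norm_deriv_right_le hcont
      (fun s hs => ((hfd s (Ico_subset_Icc_self hs)).hasDerivWithinAt))
    · simp [hf, hγ, h0, h0']
    · intro s hs
      have hs' := Ico_subset_Icc_self hs
      have hnf : ‖f s‖ = max |u (γ s)| |deriv u (γ s)| := by
        simp [hf, Prod.norm_def, Real.norm_eq_abs, abs_mul, hσ1]
      have hnF : ‖F s‖ = max |deriv u (γ s)| (|q (γ s)| * |u (γ s)|) := by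
        simp [hF, Prod.norm_def, Real.norm_eq_abs, abs_mul, hσ1]
      rw [hnf, hnF, add_zero]
      have hq := hbound s hs'
      have M1 : |u (γ s)| ≤ max |u (γ s)| |deriv u (γ s)| := le_max_left _ _
      have M2 : |deriv u (γ s)| ≤ max |u (γ s)| |deriv u (γ s)| := le_max_right _ _
      have M0 : (0:ℝ) ≤ max |u (γ s)| |deriv u (γ s)| := le_trans (abs_nonneg _) M1
      apply max_le
      · nlinarith
      · nlinarith [abs_nonneg (u (γ s)), abs_nonneg (q (γ s))]
  intro s hs
  have h1 := key s hs
  rw [gronwallBound_ε0_δ0] at h1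
  have h2 : f s = 0 := norm_le_zero_iff.1 h1
  have := congrArg Prod.fst h2
  simpa [hf] using this

lemma propagate (I : Set ℝ) (hI : I.OrdConnected) (q u : ℝ → ℝ)
    (hq : ContinuousOn q I) (hu : ContDiffOn ℝ 2 u I)
    (hode : ∀ x ∈ I, deriv (deriv u) x = q x * u x)
    (t₀ : ℝ) (ht₀ : t₀ ∈ I) (hzero : ∀ᶠ y in 𝓝 t₀, u y = 0) :
    ∀ x ∈ I, u x = 0 := by
  have h0 : u t₀ = 0 := hzero.self_of_nhds
  have h0' : deriv u t₀ = 0 := by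
    have : deriv u t₀ = deriv (fun _ => (0:ℝ)) t₀ := Filter.EventuallyEq.deriv_eq hzero
    simpa using this
  have hcdt₀ : ContDiffAt ℝ 2 u t₀ :=
    (contDiffAt_const (c := (0:ℝ))).congr_of_eventuallyEq hzero
  intro x hx
  rcases lt_trichotomy x t₀ with hlt | heq | hgt
  · -- x < t₀ : go left, σ = -1
    have hIcc : Icc x t₀ ⊆ I := hI.out hx ht₀
    have key : ∀ x' ∈ Ioc x t₀, u x' = 0 := by
      intro x' hx'
      rcases eq_or_lt_of_le hx'.2 with he | hlt'
      · rw [he]; exact h0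
      have hIcc' : Icc x' t₀ ⊆ I := fun y hy => hIcc ⟨hx'.1.le.trans hy.1, hy.2⟩
      obtain ⟨K, hK⟩ := (isCompact_Icc (a := x') (b := t₀)).exists_bound_of_continuousOn
        (hq.mono hIcc')
      have hK0 : 0 ≤ K := le_trans (norm_nonneg _) (hK t₀ (right_mem_Icc.2 hlt'.le))
      have hmem : ∀ s ∈ Icc (0:ℝ) (t₀ - x'), t₀ + (-1) * s ∈ Icc x' t₀ := by
        intro s hs
        simp only [mem_Icc]
        constructor <;> [linarith [hs.2]; linarith [hs.1]]
      have hcd : ∀ t ∈ Icc x' t₀, ContDiffAt ℝ 2 u t := by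
        intro t ht
        rcases eq_or_lt_of_le ht.2 with he | h
        · rw [he]; exact hcdt₀
        · refine hu.contDiffAt (mem_of_superset ((isOpen_Ioo (a := x) (b := t₀)).mem_nhds
            ⟨lt_of_lt_of_le hx'.1 ht.1, h⟩) (fun y hy => hIcc (Ioo_subset_Icc_self hy)))
      have hg := gron q u t₀ (t₀ - x') (-1) K (by ring) hK0
        (fun s hs => hcd _ (hmem s hs))
        (fun s hs => hode _ (hIcc' (hmem s hs)))
        (fun s hs => by simpa [Real.norm_eq_abs] using hK _ (hmem s hs))
        h0 h0' (t₀ - x') ⟨by linarith, le_refl _⟩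
      rw [show t₀ + (-1) * (t₀ - x') = x' by ring] at hg
      exact hg
    have hnb : (𝓝[Ioc x t₀] x).NeBot := by
      rw [← mem_closure_iff_nhdsWithin_neBot, closure_Ioc (ne_of_lt hlt)]
      exact left_mem_Icc.2 hlt.le
    have h1 : Tendsto u (𝓝[Ioc x t₀] x) (𝓝 (u x)) :=
      (hu.continuousOn x hx).mono (fun y hy => hIcc (Ioc_subset_Icc_self hy))
    have h2 : Tendsto u (𝓝[Ioc x t₀] x) (𝓝 0) :=
      tendsto_const_nhds.congr' (eventually_mem_nhdsWithin.mono fun y hy => (key y hy).symm)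
    exact tendsto_nhds_unique h1 h2
  · rw [heq]; exact h0
  · -- t₀ < x : go right, σ = 1
    have hIcc : Icc t₀ x ⊆ I := hI.out ht₀ hx
    have key : ∀ x' ∈ Ico t₀ x, u x' = 0 := by
      intro x' hx'
      rcases eq_or_lt_of_le hx'.1 with he | hlt'
      · rw [← he]; exact h0
      have hIcc' : Icc t₀ x' ⊆ I := fun y hy => hIcc ⟨hy.1, hy.2.trans hx'.2.le⟩
      obtain ⟨K, hK⟩ := (isCompact_Icc (a := t₀) (b := x')).exists_bound_of_continuousOn
        (hq.mono hIcc')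
      have hK0 : 0 ≤ K := le_trans (norm_nonneg _) (hK t₀ (left_mem_Icc.2 hlt'.le))
      have hmem : ∀ s ∈ Icc (0:ℝ) (x' - t₀), t₀ + 1 * s ∈ Icc t₀ x' := by
        intro s hs
        simp only [mem_Icc, one_mul]
        constructor <;> [linarith [hs.1]; linarith [hs.2]]
      have hcd : ∀ t ∈ Icc t₀ x', ContDiffAt ℝ 2 u t := by
        intro t ht
        rcases eq_or_lt_of_le ht.1 with he | h
        · rw [← he]; exact hcdt₀
        · refine hu.contDiffAt (mem_of_superset ((isOpen_Ioo (a := t₀) (b := x)).mem_nhds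
            ⟨h, lt_of_le_of_lt ht.2 hx'.2⟩) (fun y hy => hIcc (Ioo_subset_Icc_self hy)))
      have hg := gron q u t₀ (x' - t₀) 1 K (by ring) hK0
        (fun s hs => hcd _ (hmem s hs))
        (fun s hs => hode _ (hIcc' (hmem s hs)))
        (fun s hs => by simpa [Real.norm_eq_abs] using hK _ (hmem s hs))
        h0 h0' (x' - t₀) ⟨by linarith, le_refl _⟩
      rw [show t₀ + 1 * (x' - t₀) = x' by ring] at hg
      exact hg
    have hnb : (𝓝[Ico t₀ x] x).NeBot := by
      rw [← mem_closure_iff_nhdsWithin_neBot, closure_Ico hgt.ne]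
      exact right_mem_Icc.2 hgt.le
    have h1 : Tendsto u (𝓝[Ico t₀ x] x) (𝓝 (u x)) :=
      (hu.continuousOn x hx).mono (fun y hy => hIcc (Ico_subset_Icc_self hy))
    have h2 : Tendsto u (𝓝[Ico t₀ x] x) (𝓝 0) :=
      tendsto_const_nhds.congr' (eventually_mem_nhdsWithin.mono fun y hy => (key y hy).symm)
    exact tendsto_nhds_unique h1 h2

lemma sign_const {f : ℝ → ℝ} {a b : ℝ} (hf : ContinuousOn f (Ioo a b))
    (hne : ∀ x ∈ Ioo a b, f x ≠ 0) :
    (∀ x ∈ Ioo a b, 0 < f x) ∨ (∀ x ∈ Ioo a b, f x < 0) := by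
  by_contra h
  push_neg at h
  obtain ⟨⟨x, hx, hx0⟩, ⟨y, hy, hy0⟩⟩ := h
  have hfx : f x < 0 := lt_of_le_of_ne hx0 (hne x hx)
  have hfy : 0 < f y := lt_of_le_of_ne hy0 (Ne.symm (hne y hy))
  have hsub : uIcc x y ⊆ Ioo a b := (ordConnected_Ioo).uIcc_subset hx hy
  have h0 : (0:ℝ) ∈ uIcc (f x) (f y) := by
    rw [mem_uIcc]; left; exact ⟨hfx.le, hfy.le⟩
  obtain ⟨z, hz, hz0⟩ := intermediate_value_uIcc (hf.mono hsub) h0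
  exact hne z (hsub hz) hz0

lemma neg_ode (u q : ℝ → ℝ) (x : ℝ) (h : deriv (deriv u) x = q x * u x) :
    deriv (deriv (fun y => -u y)) x = q x * (-u x) := by
  rw [show deriv (fun y => -u y) = fun y => -(deriv u y) from funext fun y => deriv.neg,
    deriv.fun_neg, h]
  ring

lemma wronskian_core (q₀ q₁ u₀ u₁ : ℝ → ℝ) (a b : ℝ) (hab : a < b)
    (hq : ∀ x ∈ Ioo a b, q₁ x < q₀ x)
    (hu₀ : ContDiffOn ℝ 2 u₀ (Icc a b)) (hu₁ : ContDiffOn ℝ 2 u₁ (Icc a b))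
    (hcd₀ : ∀ x ∈ Ioo a b, ContDiffAt ℝ 2 u₀ x) (hcd₁ : ∀ x ∈ Ioo a b, ContDiffAt ℝ 2 u₁ x)
    (hode₀ : ∀ x ∈ Ioo a b, deriv (deriv u₀) x = q₀ x * u₀ x)
    (hode₁ : ∀ x ∈ Ioo a b, deriv (deriv u₁) x = q₁ x * u₁ x)
    (hpos₀ : ∀ x ∈ Ioo a b, 0 < u₀ x) (hpos₁ : ∀ x ∈ Ioo a b, 0 < u₁ x)
    (hza : u₀ a = 0) (hzb : u₀ b = 0) : False := by
  have hmema : a ∈ Icc a b := left_mem_Icc.2 hab.le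
  have hmemb : b ∈ Icc a b := right_mem_Icc.2 hab.le
  set d₀ : ℝ → ℝ := derivWithin u₀ (Icc a b) with hd₀
  set d₁ : ℝ → ℝ := derivWithin u₁ (Icc a b) with hd₁
  have hud := uniqueDiffOn_Icc hab
  have hd₀c : ContinuousOn d₀ (Icc a b) := hu₀.continuousOn_derivWithin hud one_le_two
  have hd₁c : ContinuousOn d₁ (Icc a b) := hu₁.continuousOn_derivWithin hud one_le_two
  have hd₀eq : ∀ x ∈ Ioo a b, d₀ x = deriv u₀ x := fun x hx =>
    derivWithin_of_mem_nhds (Icc_mem_nhds hx.1 hx.2)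
  have hd₁eq : ∀ x ∈ Ioo a b, d₁ x = deriv u₁ x := fun x hx =>
    derivWithin_of_mem_nhds (Icc_mem_nhds hx.1 hx.2)
  set W : ℝ → ℝ := fun x => d₀ x * u₁ x - u₀ x * d₁ x with hW
  have hWc : ContinuousOn W (Icc a b) :=
    (hd₀c.mul hu₁.continuousOn).sub (hu₀.continuousOn.mul hd₁c)
  have hWd : ∀ x ∈ Ioo a b, HasDerivAt W ((q₀ x - q₁ x) * (u₀ x * u₁ x)) x := by
    intro x hx
    obtain ⟨h01, h02⟩ := aux_diff2 (hcd₀ x hx)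
    obtain ⟨h11, h12⟩ := aux_diff2 (hcd₁ x hx)
    have hWhat : HasDerivAt (fun y => deriv u₀ y * u₁ y - u₀ y * deriv u₁ y)
        ((q₀ x - q₁ x) * (u₀ x * u₁ x)) x := by
      refine ((h02.mul h11).sub (h01.mul h12)).congr_deriv ?_
      rw [hode₀ x hx, hode₁ x hx]; ring
    apply hWhat.congr_of_eventuallyEq
    filter_upwards [isOpen_Ioo.mem_nhds hx] with y hy
    rw [hW]; simp only [hd₀eq y hy, hd₁eq y hy]
  have hmono : StrictMonoOn W (Icc a b) := by
    apply strictMonoOn_of_deriv_pos (convex_Icc a b) hWc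
    intro x hx
    rw [interior_Icc] at hx
    rw [(hWd x hx).deriv]
    exact mul_pos (sub_pos.2 (hq x hx)) (mul_pos (hpos₀ x hx) (hpos₁ x hx))
  have hWab : W a < W b := hmono hmema hmemb hab
  have nba : (𝓝[Ioo a b] a).NeBot := by
    rw [← mem_closure_iff_nhdsWithin_neBot, closure_Ioo hab.ne]; exact hmema
  have nbb : (𝓝[Ioo a b] b).NeBot := by
    rw [← mem_closure_iff_nhdsWithin_neBot, closure_Ioo hab.ne]; exact hmemb
  have hIooIcc : Ioo a b ⊆ Icc a b := Ioo_subset_Icc_self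
  have hu₁a : 0 ≤ u₁ a := by
    have ht : Filter.Tendsto u₁ (𝓝[Ioo a b] a) (𝓝 (u₁ a)) :=
      (hu₁.continuousOn a hmema).mono hIooIcc
    exact ge_of_tendsto ht (eventually_mem_nhdsWithin.mono fun y hy => (hpos₁ y hy).le)
  have hu₁b : 0 ≤ u₁ b := by
    have ht : Filter.Tendsto u₁ (𝓝[Ioo a b] b) (𝓝 (u₁ b)) :=
      (hu₁.continuousOn b hmemb).mono hIooIcc
    exact ge_of_tendsto ht (eventually_mem_nhdsWithin.mono fun y hy => (hpos₁ y hy).le)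
  have hslopea : Filter.Tendsto (slope u₀ a) (𝓝[Ioo a b] a) (𝓝 (d₀ a)) := by
    have hda : HasDerivWithinAt u₀ (d₀ a) (Icc a b) a :=
      ((hu₀.differentiableOn two_ne_zero) a hmema).hasDerivWithinAt
    rw [hasDerivWithinAt_iff_tendsto_slope] at hda
    exact hda.mono_left (nhdsWithin_mono _ (fun y hy => ⟨hIooIcc hy, ne_of_gt hy.1⟩))
  have hslopeb : Filter.Tendsto (slope u₀ b) (𝓝[Ioo a b] b) (𝓝 (d₀ b)) := by
    have hdb : HasDerivWithinAt u₀ (d₀ b) (Icc a b) b :=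
      ((hu₀.differentiableOn two_ne_zero) b hmemb).hasDerivWithinAt
    rw [hasDerivWithinAt_iff_tendsto_slope] at hdb
    exact hdb.mono_left (nhdsWithin_mono _ (fun y hy => ⟨hIooIcc hy, ne_of_lt hy.2⟩))
  have hd₀a : 0 ≤ d₀ a := by
    apply ge_of_tendsto hslopea
    apply eventually_mem_nhdsWithin.mono
    intro y hy
    rw [slope_def_field, hza, sub_zero]
    exact div_nonneg (hpos₀ y hy).le (by linarith [hy.1])
  have hd₀b : d₀ b ≤ 0 := by
    apply le_of_tendsto hslopeb
    apply eventually_mem_nhdsWithin.mono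
    intro y hy
    rw [slope_def_field, hzb, sub_zero]
    exact div_nonpos_of_nonneg_of_nonpos (hpos₀ y hy).le (by linarith [hy.2])
  have hWa : 0 ≤ W a := by
    rw [hW]; simp only [hza, zero_mul, sub_zero]
    exact mul_nonneg hd₀a hu₁a
  have hWb : W b ≤ 0 := by
    rw [hW]; simp only [hzb, zero_mul, sub_zero]
    exact mul_nonpos_of_nonpos_of_nonneg hd₀b hu₁b
  linarith

lemma wronskian_core' (q₀ q₁ u₀ u₁ : ℝ → ℝ) (a b : ℝ) (hab : a < b)
    (hq : ∀ x ∈ Ioo a b, q₁ x < q₀ x)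
    (hu₀ : ContDiffOn ℝ 2 u₀ (Icc a b)) (hu₁ : ContDiffOn ℝ 2 u₁ (Icc a b))
    (hcd₀ : ∀ x ∈ Ioo a b, ContDiffAt ℝ 2 u₀ x) (hcd₁ : ∀ x ∈ Ioo a b, ContDiffAt ℝ 2 u₁ x)
    (hode₀ : ∀ x ∈ Ioo a b, deriv (deriv u₀) x = q₀ x * u₀ x)
    (hode₁ : ∀ x ∈ Ioo a b, deriv (deriv u₁) x = q₁ x * u₁ x)
    (hne₀ : ∀ x ∈ Ioo a b, u₀ x ≠ 0) (hne₁ : ∀ x ∈ Ioo a b, u₁ x ≠ 0)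
    (hza : u₀ a = 0) (hzb : u₀ b = 0) : False := by
  rcases sign_const (hu₀.continuousOn.mono Ioo_subset_Icc_self) hne₀ with h₀ | h₀ <;>
    rcases sign_const (hu₁.continuousOn.mono Ioo_subset_Icc_self) hne₁ with h₁ | h₁
  · exact wronskian_core q₀ q₁ u₀ u₁ a b hab hq hu₀ hu₁ hcd₀ hcd₁ hode₀ hode₁ h₀ h₁ hza hzb
  · exact wronskian_core q₀ q₁ u₀ (fun y => -u₁ y) a b hab hq hu₀ hu₁.neg hcd₀
      (fun x hx => (hcd₁ x hx).neg) hode₀ (fun x hx => neg_ode u₁ q₁ x (hode₁ x hx)) h₀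
      (fun x hx => neg_pos.2 (h₁ x hx)) hza hzb
  · exact wronskian_core q₀ q₁ (fun y => -u₀ y) u₁ a b hab hq hu₀.neg hu₁
      (fun x hx => (hcd₀ x hx).neg) hcd₁ (fun x hx => neg_ode u₀ q₀ x (hode₀ x hx)) hode₁
      (fun x hx => neg_pos.2 (h₀ x hx)) h₁ (by simp [hza]) (by simp [hzb])
  · exact wronskian_core q₀ q₁ (fun y => -u₀ y) (fun y => -u₁ y) a b hab hq hu₀.neg hu₁.neg
      (fun x hx => (hcd₀ x hx).neg) (fun x hx => (hcd₁ x hx).neg)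
      (fun x hx => neg_ode u₀ q₀ x (hode₀ x hx)) (fun x hx => neg_ode u₁ q₁ x (hode₁ x hx))
      (fun x hx => neg_pos.2 (h₀ x hx)) (fun x hx => neg_pos.2 (h₁ x hx))
      (by simp [hza]) (by simp [hzb])

/-- Sturm's comparison theorem: if `q₀ > q₁` pointwise on an interval `I`, and
`u_j'' = q_j u_j` with `u_j` nontrivial, then between any two zeros of `u₀`
there is a zero of `u₁`. -/
theorem sturm_comparison (I : Set ℝ) (hI : I.OrdConnected)
    (q₀ q₁ u₀ u₁ : ℝ → ℝ)
    (hq₀ : ContinuousOn q₀ I) (hq₁ : ContinuousOn q₁ I)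
    (hqlt : ∀ x ∈ I, q₁ x < q₀ x)
    (hu₀ : ContDiffOn ℝ 2 u₀ I) (hu₁ : ContDiffOn ℝ 2 u₁ I)
    (hode₀ : ∀ x ∈ I, deriv (deriv u₀) x = q₀ x * u₀ x)
    (hode₁ : ∀ x ∈ I, deriv (deriv u₁) x = q₁ x * u₁ x)
    (hnt₀ : ¬ ∀ x ∈ I, u₀ x = 0) (hnt₁ : ¬ ∀ x ∈ I, u₁ x = 0)
    (a b : ℝ) (ha : a ∈ I) (hb : b ∈ I) (hab : a < b)
    (hza : u₀ a = 0) (hzb : u₀ b = 0) :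
    ∃ c ∈ Ioo a b, u₁ c = 0 := by
  by_contra hcon
  push_neg at hcon
  push_neg at hnt₀
  obtain ⟨xw, hxwI, hxw⟩ := hnt₀
  have hIcc : Icc a b ⊆ I := hI.out ha hb
  have hIooI : Ioo a b ⊆ I := fun y hy => hIcc (Ioo_subset_Icc_self hy)
  have hnhds : ∀ x ∈ Ioo a b, I ∈ 𝓝 x := fun x hx =>
    mem_of_superset ((isOpen_Ioo).mem_nhds hx) hIooI
  have hcdAt₀ : ∀ x ∈ Ioo a b, ContDiffAt ℝ 2 u₀ x := fun x hx => hu₀.contDiffAt (hnhds x hx)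
  have hcdAt₁ : ∀ x ∈ Ioo a b, ContDiffAt ℝ 2 u₁ x := fun x hx => hu₁.contDiffAt (hnhds x hx)
  -- Step A: u₀ is not identically zero on (a, b)
  have hmex : ∃ m ∈ Ioo a b, u₀ m ≠ 0 := by
    by_contra hm
    push_neg at hm
    have ht₀ : (a + b) / 2 ∈ Ioo a b := ⟨by linarith, by linarith⟩
    have hzero : ∀ᶠ y in 𝓝 ((a + b) / 2), u₀ y = 0 := by
      filter_upwards [isOpen_Ioo.mem_nhds ht₀] with y hy using hm y hy
    exact hxw (propagate I hI q₀ u₀ hq₀ hu₀ hode₀ _ (hIooI ht₀) hzero xw hxwI)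
  obtain ⟨m, hmIoo, hm0⟩ := hmex
  -- Step B: consecutive zeros around m
  set S : Set ℝ := {x | x ∈ Icc a m ∧ u₀ x = 0} with hSdef
  set T : Set ℝ := {x | x ∈ Icc m b ∧ u₀ x = 0} with hTdef
  have hScl : IsClosed S := by
    have : S = Icc a m ∩ u₀ ⁻¹' {0} := by ext y; simp [hSdef]
    rw [this]
    exact ContinuousOn.preimage_isClosed_of_isClosed
      (hu₀.continuousOn.mono (fun y hy => hIcc ⟨hy.1, hy.2.trans hmIoo.2.le⟩))
      isClosed_Icc isClosed_singleton
  have hTcl : IsClosed T := by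
    have : T = Icc m b ∩ u₀ ⁻¹' {0} := by ext y; simp [hTdef]
    rw [this]
    exact ContinuousOn.preimage_isClosed_of_isClosed
      (hu₀.continuousOn.mono (fun y hy => hIcc ⟨hmIoo.1.le.trans hy.1, hy.2⟩))
      isClosed_Icc isClosed_singleton
  have hSne : S.Nonempty := ⟨a, ⟨left_mem_Icc.2 hmIoo.1.le, hza⟩⟩
  have hTne : T.Nonempty := ⟨b, ⟨right_mem_Icc.2 hmIoo.2.le, hzb⟩⟩
  have hSbdd : BddAbove S := ⟨m, fun y hy => hy.1.2⟩
  have hTbdd : BddBelow T := ⟨m, fun y hy => hy.1.1⟩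
  set a' := sSup S with ha'def
  set b' := sInf T with hb'def
  have ha'S : a' ∈ S := hScl.csSup_mem hSne hSbdd
  have hb'T : b' ∈ T := hTcl.csInf_mem hTne hTbdd
  have ha'm : a' < m := lt_of_le_of_ne ha'S.1.2 (fun h => hm0 (h ▸ ha'S.2))
  have hmb' : m < b' := lt_of_le_of_ne hb'T.1.1 (fun h => hm0 (h.symm ▸ hb'T.2))
  have ha'b' : a' < b' := ha'm.trans hmb'
  have hsub' : Ioo a' b' ⊆ Ioo a b := Ioo_subset_Ioo ha'S.1.1 hb'T.1.2
  have hne₀' : ∀ y ∈ Ioo a' b', u₀ y ≠ 0 := by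
    intro y hy hy0
    rcases le_total y m with h | h
    · have hyS : y ∈ S := ⟨⟨ha'S.1.1.trans hy.1.le, h⟩, hy0⟩
      exact absurd (le_csSup hSbdd hyS) (not_le.2 hy.1)
    · have hyT : y ∈ T := ⟨⟨h, hy.2.le.trans hb'T.1.2⟩, hy0⟩
      exact absurd (csInf_le hTbdd hyT) (not_le.2 hy.2)
  have hne₁' : ∀ y ∈ Ioo a' b', u₁ y ≠ 0 := fun y hy => hcon y (hsub' hy)
  have hIccsub : Icc a' b' ⊆ I := by
    intro y hy
    exact hIcc ⟨ha'S.1.1.trans hy.1, hy.2.trans hb'T.1.2⟩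
  have hIoosub : Ioo a' b' ⊆ I := fun y hy => hIooI (hsub' hy)
  exact wronskian_core' q₀ q₁ u₀ u₁ a' b' ha'b'
    (fun x hx => hqlt x (hIoosub hx))
    (hu₀.mono hIccsub) (hu₁.mono hIccsub)
    (fun x hx => hcdAt₀ x (hsub' hx)) (fun x hx => hcdAt₁ x (hsub' hx))
    (fun x hx => hode₀ x (hIoosub hx)) (fun x hx => hode₁ x (hIoosub hx))
    hne₀' hne₁' ha'S.2 hb'T.2
end

section
/- Suppose ρ : [a,∞) → (0,∞) is not integrable at ∞ and φ solves φ'(x) = ρ(x)(A sin²φ(x) + cos φ(x) sin φ(x) + B cos²φ(x)) with constants A, B such that 4AB < 1. Then every solution φ is bounded. -/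
open Real Set

private lemma quad_neg (A B : ℝ) (hAB : 4 * A * B < 1) :
    ∃ t : ℝ, A * t ^ 2 + t + B < 0 := by
  rcases lt_trichotomy B 0 with hB | hB | hB
  · exact ⟨0, by simpa using hB⟩
  · subst hB
    refine ⟨-(1 / (A ^ 2 + 1)), ?_⟩
    have h0 : (0:ℝ) < A ^ 2 + 1 := by positivity
    have h1 : A * (1 / (A ^ 2 + 1)) < 1 := by
      rw [mul_one_div, div_lt_one h0]
      nlinarith [sq_nonneg (A - 1)]
    have h2 : (0:ℝ) < 1 / (A ^ 2 + 1) := by positivity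
    have : A * (-(1 / (A ^ 2 + 1))) ^ 2 + (-(1 / (A ^ 2 + 1))) + 0
        = (1 / (A ^ 2 + 1)) * (A * (1 / (A ^ 2 + 1)) - 1) := by ring
    rw [this]
    exact mul_neg_of_pos_of_neg h2 (by linarith)
  · refine ⟨-2 * B, ?_⟩
    nlinarith [mul_lt_mul_of_pos_left hAB hB]

private lemma barrier (a : ℝ) (ρ : ℝ → ℝ) (A B : ℝ)
    (hρc : ContinuousOn ρ (Ici a)) (hρpos : ∀ x ∈ Ici a, 0 < ρ x)
    (hAB : 4 * A * B < 1)
    (φ : ℝ → ℝ)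
    (hφ : ∀ x ∈ Ici a, HasDerivAt φ
      (ρ x * (A * sin (φ x) ^ 2 + cos (φ x) * sin (φ x) + B * cos (φ x) ^ 2)) x) :
    ∃ M : ℝ, ∀ x ∈ Ici a, φ x ≤ M := by
  set Q : ℝ → ℝ := fun θ => A * sin θ ^ 2 + cos θ * sin θ + B * cos θ ^ 2 with hQdef
  have hQcont : Continuous Q := by
    rw [hQdef]; continuity
  have hQper : ∀ (x : ℝ) (n : ℕ), Q (x + n * π) = Q x := by
    have h1 : ∀ x, Q (x + π) = Q x := by
      intro x; simp only [hQdef, sin_add_pi, cos_add_pi]; ring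
    intro x n
    induction n with
    | zero => simp
    | succ n ih =>
        have h2 : x + ((n : ℝ) + 1) * π = (x + n * π) + π := by ring
        push_cast
        rw [h2, h1]
        exact_mod_cast ih
  obtain ⟨t, ht⟩ := quad_neg A B hAB
  set p := arctan t with hpdef
  have hQp : Q p < 0 := by
    have hc : cos p = 1 / Real.sqrt (1 + t ^ 2) := cos_arctan t
    have hs : sin p = t / Real.sqrt (1 + t ^ 2) := sin_arctan t
    have h0 : (0:ℝ) < 1 + t ^ 2 := by positivity
    have hspos : 0 < Real.sqrt (1 + t ^ 2) := Real.sqrt_pos.mpr h0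
    have hsq : Real.sqrt (1 + t ^ 2) ^ 2 = 1 + t ^ 2 := Real.sq_sqrt h0.le
    have hQeq : Q p = (A * t ^ 2 + t + B) / (1 + t ^ 2) := by
      simp only [hQdef, hc, hs]
      rw [div_pow, div_pow, one_pow, hsq, div_mul_div_comm, one_mul, ← pow_two, hsq]
      field_simp
    rw [hQeq]
    exact div_neg_of_neg_of_pos ht h0
  -- neighborhood where Q < 0
  have hop : IsOpen {x : ℝ | Q x < 0} := isOpen_lt hQcont continuous_const
  obtain ⟨ε, hε, hball⟩ := Metric.isOpen_iff.mp hop p hQp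
  set δ := ε / 2 with hδdef
  have hδ : 0 < δ := by positivity
  have hQneg0 : ∀ x ∈ Icc (p - δ) (p + δ), Q x < 0 := by
    intro x hx
    apply hball
    rw [Metric.mem_ball, Real.dist_eq]
    have h1 : |x - p| ≤ δ := abs_sub_le_iff.mpr ⟨by linarith [hx.2], by linarith [hx.1]⟩
    linarith
  obtain ⟨n, hn⟩ := exists_nat_ge ((φ a - (p - δ)) / π)
  set L := p - δ + n * π with hLdef
  have hL : φ a ≤ L := by
    have := (div_le_iff₀ pi_pos).mp hn
    simp only [hLdef]; linarith
  have hQnegL : ∀ θ ∈ Icc L (L + δ), Q θ ≤ 0 := by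
    intro θ hθ
    have h1 : θ - n * π ∈ Icc (p - δ) (p + δ) := by
      simp only [hLdef] at hθ
      constructor <;> [linarith [hθ.1]; linarith [hθ.2, hδ.le]]
    have h3 : θ - n * π + n * π = θ := by ring
    have h2 := hQneg0 _ h1
    rw [← h3, hQper]
    linarith
  refine ⟨L + δ, ?_⟩
  intro x₂ hx₂
  by_contra hcon
  push_neg at hcon
  have hφcont : ∀ x ∈ Ici a, ContinuousAt φ x := fun x hx => (hφ x hx).continuousAt
  have hax₂ : a ≤ x₂ := hx₂
  set S := {x | x ∈ Icc a x₂ ∧ φ x ≤ L} with hSdef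
  have haS : a ∈ S := ⟨⟨le_refl a, hax₂⟩, hL⟩
  have hSne : S.Nonempty := ⟨a, haS⟩
  have hSbdd : BddAbove S := ⟨x₂, fun y hy => hy.1.2⟩
  set s := sSup S with hsdef
  have hsa : a ≤ s := le_csSup hSbdd haS
  have hsle : s ≤ x₂ := csSup_le hSne (fun y hy => hy.1.2)
  have hφsle : φ s ≤ L := by
    by_contra h
    push_neg at h
    have h2 : φ ⁻¹' (Ioi L) ∈ nhds s := hφcont s hsa (Ioi_mem_nhds h)
    obtain ⟨η, hη, hb⟩ := Metric.mem_nhds_iff.mp h2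
    obtain ⟨y, hyS, hy⟩ := exists_lt_of_lt_csSup hSne (show s - η < s by linarith)
    have hyle : y ≤ s := le_csSup hSbdd hyS
    have hmem : y ∈ Metric.ball s η := by
      rw [Metric.mem_ball, Real.dist_eq, abs_sub_lt_iff]
      constructor <;> linarith
    have := hb hmem
    exact absurd hyS.2 (not_le.mpr this)
  have hφsge : L ≤ φ s := by
    by_contra h
    push_neg at h
    have hsx₂ : s < x₂ := by
      rcases lt_or_eq_of_le hsle with h' | h'
      · exact h'
      · exfalso; rw [h'] at h; linarith [hδ]
    have h2 : φ ⁻¹' (Iio L) ∈ nhds s := hφcont s hsa (Iio_mem_nhds h)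
    obtain ⟨η, hη, hb⟩ := Metric.mem_nhds_iff.mp h2
    set y := min (s + η / 2) x₂ with hydef
    have hy1 : s < y := lt_min (by linarith) hsx₂
    have hy2 : y ∈ Metric.ball s η := by
      rw [Metric.mem_ball, Real.dist_eq, abs_sub_lt_iff]
      have := min_le_left (s + η / 2) x₂
      constructor <;> linarith
    have hy3 : φ y < L := hb hy2
    have hyS : y ∈ S := ⟨⟨by linarith, min_le_right _ _⟩, hy3.le⟩
    have := le_csSup hSbdd hyS
    linarith
  set T := {x | x ∈ Icc s x₂ ∧ L + δ ≤ φ x} with hTdef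
  have hx₂T : x₂ ∈ T := ⟨⟨hsle, le_refl _⟩, hcon.le⟩
  have hTne : T.Nonempty := ⟨x₂, hx₂T⟩
  have hTbdd : BddBelow T := ⟨s, fun y hy => hy.1.1⟩
  set u := sInf T with hudef
  have hus : s ≤ u := le_csInf hTne (fun y hy => hy.1.1)
  have hux₂ : u ≤ x₂ := csInf_le hTbdd hx₂T
  have hua : a ≤ u := le_trans hsa hus
  have hφuge : L + δ ≤ φ u := by
    by_contra h
    push_neg at h
    have h2 : φ ⁻¹' (Iio (L + δ)) ∈ nhds u := hφcont u hua (Iio_mem_nhds h)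
    obtain ⟨η, hη, hb⟩ := Metric.mem_nhds_iff.mp h2
    obtain ⟨y, hyT, hy⟩ := exists_lt_of_csInf_lt hTne (show u < u + η by linarith)
    have hyge : u ≤ y := csInf_le hTbdd hyT
    have hmem : y ∈ Metric.ball u η := by
      rw [Metric.mem_ball, Real.dist_eq, abs_sub_lt_iff]
      constructor <;> linarith
    have := hb hmem
    exact absurd hyT.2 (not_le.mpr this)
  have hsu : s < u := by
    rcases lt_or_eq_of_le hus with h' | h'
    · exact h'
    · exfalso; rw [← h'] at hφuge; linarith
  have hgtL : ∀ t', s < t' → t' ≤ x₂ → L < φ t' := by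
    intro t' h1 h2
    by_contra h
    push_neg at h
    have : t' ∈ S := ⟨⟨le_trans hsa h1.le, h2⟩, h⟩
    have := le_csSup hSbdd this
    linarith
  have hltδ : ∀ t', s ≤ t' → t' < u → φ t' < L + δ := by
    intro t' h1 h2
    by_contra h
    push_neg at h
    have : t' ∈ T := ⟨⟨h1, (lt_of_lt_of_le h2 hux₂).le⟩, h⟩
    have := csInf_le hTbdd this
    linarith
  have hφule : φ u ≤ L + δ := by
    by_contra h
    push_neg at h
    have h2 : φ ⁻¹' (Ioi (L + δ)) ∈ nhds u := hφcont u hua (Ioi_mem_nhds h)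
    obtain ⟨η, hη, hb⟩ := Metric.mem_nhds_iff.mp h2
    set y := max s (u - η / 2) with hydef
    have hy1 : y < u := max_lt hsu (by linarith)
    have hy2 : s ≤ y := le_max_left _ _
    have hmem : y ∈ Metric.ball u η := by
      rw [Metric.mem_ball, Real.dist_eq, abs_sub_lt_iff]
      have := le_max_right s (u - η / 2)
      constructor <;> linarith
    have h3 := hb hmem
    have h4 := hltδ y hy2 hy1
    exact absurd h3 (not_lt.mpr h4.le)
  have hbnd : ∀ t' ∈ Icc s u, L ≤ φ t' ∧ φ t' ≤ L + δ := by
    intro t' ht'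
    rcases eq_or_lt_of_le ht'.1 with h1 | h1
    · exact ⟨by rw [← h1]; exact hφsge, by rw [← h1]; linarith⟩
    · refine ⟨(hgtL t' h1 (le_trans ht'.2 hux₂)).le, ?_⟩
      rcases eq_or_lt_of_le ht'.2 with h2 | h2
      · rw [h2]; exact hφule
      · exact (hltδ t' ht'.1 h2).le
  have hsub : Icc s u ⊆ Ici a := fun t' ht' => le_trans hsa ht'.1
  have hderiv : ∀ t' ∈ uIcc s u, HasDerivAt φ (ρ t' * Q (φ t')) t' := by
    intro t' ht'
    rw [uIcc_of_le hsu.le] at ht'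
    simp only [hQdef]
    exact hφ t' (hsub ht')
  have hcont' : ContinuousOn (fun t' => ρ t' * Q (φ t')) (Icc s u) := by
    apply ContinuousOn.mul (hρc.mono hsub)
    exact hQcont.comp_continuousOn
      (fun x hx => (hφcont x (hsub hx)).continuousWithinAt)
  have hint : IntervalIntegrable (fun t' => ρ t' * Q (φ t')) MeasureTheory.volume s u := by
    apply ContinuousOn.intervalIntegrable
    rwa [uIcc_of_le hsu.le]
  have heq := intervalIntegral.integral_eq_sub_of_hasDerivAt hderiv hint
  have hge : 0 ≤ ∫ t' in s..u, -(ρ t' * Q (φ t')) := by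
    apply intervalIntegral.integral_nonneg hsu.le
    intro t' ht'
    have h1 := hbnd t' ht'
    have h2 := hQnegL (φ t') ⟨h1.1, h1.2⟩
    have h3 := (hρpos t' (hsub ht')).le
    have := mul_nonpos_of_nonneg_of_nonpos h3 h2
    linarith
  rw [intervalIntegral.integral_neg, heq] at hge
  linarith

/-- If `ρ > 0` is continuous and not integrable at `∞`, `4AB < 1`, and `φ` solves
`φ' = ρ(A sin²φ + cosφ sinφ + B cos²φ)`, then `φ` is bounded. -/
theorem prufer_bounded (a : ℝ) (ρ : ℝ → ℝ) (A B : ℝ)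
    (hρc : ContinuousOn ρ (Ici a)) (hρpos : ∀ x ∈ Ici a, 0 < ρ x)
    (hρnonint : ¬ MeasureTheory.IntegrableOn ρ (Ici a))
    (hAB : 4 * A * B < 1)
    (φ : ℝ → ℝ)
    (hφ : ∀ x ∈ Ici a, HasDerivAt φ
      (ρ x * (A * sin (φ x) ^ 2 + cos (φ x) * sin (φ x) + B * cos (φ x) ^ 2)) x) :
    ∃ M : ℝ, ∀ x ∈ Ici a, |φ x| ≤ M := by
  obtain ⟨M₁, hM₁⟩ := barrier a ρ A B hρc hρpos hAB φ hφ
  have hAB' : 4 * (-A) * (-B) < 1 := by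
    have h : 4 * (-A) * (-B) = 4 * A * B := by ring
    rw [h]; exact hAB
  have hφ' : ∀ x ∈ Ici a, HasDerivAt (fun y => -φ y)
      (ρ x * ((-A) * sin ((fun y => -φ y) x) ^ 2 +
        cos ((fun y => -φ y) x) * sin ((fun y => -φ y) x) +
        (-B) * cos ((fun y => -φ y) x) ^ 2)) x := by
    intro x hx
    have h : HasDerivAt (fun y => -φ y) _ x := (hφ x hx).neg
    convert h using 1
    simp only [sin_neg, cos_neg]
    ring
  obtain ⟨M₂, hM₂⟩ := barrier a ρ (-A) (-B) hρc hρpos hAB' (fun y => -φ y) hφ'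
  refine ⟨max M₁ M₂, fun x hx => ?_⟩
  rw [abs_le]
  constructor
  · have h := hM₂ x hx
    have := le_max_right M₁ M₂
    linarith
  · have := le_max_left M₁ M₂
    linarith [hM₁ x hx]
end

section
/- Suppose ρ : [a,∞) → (0,∞) is continuous, not integrable at ∞, and φ solves φ'(x) = ρ(x)(A sin²φ(x) + cos φ(x) sin φ(x) + B cos²φ(x)) with 4AB > 1 and A > 0. Then φ(x) → ∞ and moreover φ(x) / ∫_a^x ρ(t)dt → (1/2)√(4AB − 1) as x → ∞. -/
open Real Set

lemma key_deriv_prufer (A B D : ℝ) (hA : 0 < A) (hB : 0 < B) (hD : 0 < D)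
    (hD2 : D ^ 2 = A * B - 1/4) (θ : ℝ) :
    HasDerivAt (fun θ : ℝ => θ / D + (1 / D) * arctan ((cos (2*θ)/2 - (B-A)/2 * sin (2*θ)) /
      ((A+B)/2 + D + sin (2*θ)/2 + (B-A)/2 * cos (2*θ))))
      (1 / (A * sin θ ^ 2 + cos θ * sin θ + B * cos θ ^ 2)) θ := by
  have hSC : sin (2*θ) ^ 2 + cos (2*θ) ^ 2 = 1 := sin_sq_add_cos_sq _
  set S := sin (2*θ) with hS'
  set C := cos (2*θ) with hC'
  -- positivity of v
  have hpD : 0 < (A+B)/2 + D := by nlinarith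
  have hps : 0 < (A+B)/2 + S/2 + (B-A)/2 * C := by
    have hs2 : (S/2 + (B-A)/2*C)^2 ≤ ((A+B)/2)^2 - D^2 := by
      nlinarith [sq_nonneg (C/2 - (B-A)/2*S)]
    nlinarith [hs2, mul_pos hD hD, mul_pos hA hB]
  have hv : 0 < (A+B)/2 + D + S/2 + (B-A)/2 * C := by linarith
  have hvne : ((A+B)/2 + D + S/2 + (B-A)/2 * C) ≠ 0 := ne_of_gt hv
  -- derivative chain
  have h2θ : HasDerivAt (fun θ : ℝ => 2*θ) 2 θ := by
    simpa using (hasDerivAt_id θ).const_mul 2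
  have hSd : HasDerivAt (fun θ : ℝ => sin (2*θ)) (C * 2) θ := (Real.hasDerivAt_sin _).comp θ h2θ
  have hCd : HasDerivAt (fun θ : ℝ => cos (2*θ)) (-S * 2) θ := (Real.hasDerivAt_cos _).comp θ h2θ
  have hu : HasDerivAt (fun θ : ℝ => cos (2*θ)/2 - (B-A)/2 * sin (2*θ))
      (-S - (B-A) * C) θ := by
    have := (hCd.div_const 2).sub (hSd.const_mul ((B-A)/2))
    exact this.congr_deriv (by ring)
  have hvd : HasDerivAt (fun θ : ℝ => (A+B)/2 + D + sin (2*θ)/2 + (B-A)/2 * cos (2*θ))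
      (C - (B-A) * S) θ := by
    have := (((hasDerivAt_const θ ((A+B)/2 + D)).add (hSd.div_const 2))).add (hCd.const_mul ((B-A)/2))
    exact this.congr_deriv (by ring)
  set u := C/2 - (B-A)/2 * S with hu'
  set v := (A+B)/2 + D + S/2 + (B-A)/2 * C with hv'
  have hw : HasDerivAt (fun θ : ℝ => (cos (2*θ)/2 - (B-A)/2 * sin (2*θ)) /
      ((A+B)/2 + D + sin (2*θ)/2 + (B-A)/2 * cos (2*θ)))
      (((-S - (B-A) * C) * v - u * (C - (B-A) * S)) / v ^ 2) θ := hu.div hvd hvne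
  have harc := (Real.hasDerivAt_arctan (u / v)).comp θ hw
  have htot := ((hasDerivAt_id θ).div_const D).add (harc.const_mul (1 / D))
  refine htot.congr_deriv (Eq.symm ?_)
  -- algebraic identity
  have h1 : v ^ 2 + u ^ 2 = 2 * ((A+B)/2 + D) * ((A+B)/2 + S/2 + (B-A)/2 * C) := by
    rw [hu', hv']; linear_combination ((1:ℝ)/4 + (B-A)^2/4) * hSC + hD2
  have h2 : (-S - (B-A) * C) * v - u * (C - (B-A) * S)
      = 2 * ((A+B)/2 + D) * (D - (A+B)/2 - S/2 - (B-A)/2 * C) := by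
    rw [hu', hv']; linear_combination (-(1:ℝ)/2 - (B-A)^2/2) * hSC - 2 * hD2
  have hF : A * sin θ ^ 2 + cos θ * sin θ + B * cos θ ^ 2
      = (A+B)/2 + S/2 + (B-A)/2 * C := by
    rw [hS', hC', Real.sin_two_mul, Real.cos_two_mul]
    linear_combination A * sin_sq_add_cos_sq θ
  have e1 : ∀ X : ℝ, 1/(1+(u/v)^2) * (X/v^2) = X/(v^2+u^2) := by
    intro X
    rw [div_mul_div_comm, one_mul]
    congr 1
    field_simp
  rw [hF, e1, h1, h2]
  have h2pD : (2 * ((A+B)/2 + D)) ≠ 0 := by positivity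
  have hps' : ((A+B)/2 + S/2 + (B-A)/2 * C) ≠ 0 := ne_of_gt hps
  rw [mul_div_mul_left _ _ h2pD]
  field_simp [hD.ne', hps']
  have hY : (A + B + S + (B - A) * C) ≠ 0 := ne_of_gt (by linarith)
  field_simp [hY, hD.ne']
  ring

/-- If `ρ > 0` is continuous with `∫_a^∞ ρ = ∞`, `A > 0`, `4AB > 1`, and `φ` solves
`φ' = ρ(A sin²φ + cosφ sinφ + B cos²φ)`, then `φ(x)/∫_a^x ρ → √(4AB−1)/2`. -/
theorem prufer_unbounded_asymptotics (a : ℝ) (ρ : ℝ → ℝ) (A B : ℝ)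
    (hρc : ContinuousOn ρ (Ici a)) (hρpos : ∀ x ∈ Ici a, 0 < ρ x)
    (hρnonint : ¬ MeasureTheory.IntegrableOn ρ (Ici a))
    (hA : 0 < A) (hAB : 1 < 4 * A * B)
    (φ : ℝ → ℝ)
    (hφ : ∀ x ∈ Ici a, HasDerivAt φ
      (ρ x * (A * sin (φ x) ^ 2 + cos (φ x) * sin (φ x) + B * cos (φ x) ^ 2)) x) :
    Filter.Tendsto (fun x => φ x / ∫ t in a..x, ρ t) Filter.atTop
      (nhds (Real.sqrt (4 * A * B - 1) / 2)) := by
  have hB : 0 < B := by nlinarith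
  set D : ℝ := Real.sqrt (4 * A * B - 1) / 2 with hD'
  have hD : 0 < D := div_pos (Real.sqrt_pos.mpr (by linarith)) two_pos
  have hD2 : D ^ 2 = A * B - 1/4 := by
    rw [hD', div_pow, Real.sq_sqrt (by linarith : (0:ℝ) ≤ 4 * A * B - 1)]; ring
  -- positivity of the quadratic form
  have hFpos : ∀ θ : ℝ, 0 < A * sin θ ^ 2 + cos θ * sin θ + B * cos θ ^ 2 := by
    intro θ
    nlinarith [sin_sq_add_cos_sq θ, sq_nonneg (2 * A * sin θ + cos θ),
      sq_nonneg (2 * B * cos θ + sin θ), sq_nonneg (sin θ), sq_nonneg (cos θ)]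
  -- the antiderivative H of 1/F
  set H : ℝ → ℝ := fun θ => θ / D + (1 / D) * arctan ((cos (2*θ)/2 - (B-A)/2 * sin (2*θ)) /
      ((A+B)/2 + D + sin (2*θ)/2 + (B-A)/2 * cos (2*θ))) with hH'
  have hH : ∀ θ : ℝ, HasDerivAt H (1 / (A * sin θ ^ 2 + cos θ * sin θ + B * cos θ ^ 2)) θ :=
    fun θ => key_deriv_prufer A B D hA hB hD hD2 θ
  have hHb : ∀ θ : ℝ, |H θ - θ / D| ≤ (1/D) * (π/2) := by
    intro θ
    have h1 : |arctan ((cos (2*θ)/2 - (B-A)/2 * sin (2*θ)) /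
        ((A+B)/2 + D + sin (2*θ)/2 + (B-A)/2 * cos (2*θ)))| ≤ π/2 := by
      rw [abs_le]
      constructor
      · linarith [neg_pi_div_two_lt_arctan ((cos (2*θ)/2 - (B-A)/2 * sin (2*θ)) /
          ((A+B)/2 + D + sin (2*θ)/2 + (B-A)/2 * cos (2*θ)))]
      · linarith [arctan_lt_pi_div_two ((cos (2*θ)/2 - (B-A)/2 * sin (2*θ)) /
          ((A+B)/2 + D + sin (2*θ)/2 + (B-A)/2 * cos (2*θ)))]
    have : H θ - θ / D = (1/D) * arctan ((cos (2*θ)/2 - (B-A)/2 * sin (2*θ)) /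
        ((A+B)/2 + D + sin (2*θ)/2 + (B-A)/2 * cos (2*θ))) := by rw [hH']; ring
    rw [this, abs_mul, abs_of_pos (by positivity : (0:ℝ) < 1/D)]
    exact mul_le_mul_of_nonneg_left h1 (by positivity)
  -- extend ρ continuously to all of ℝ
  set ρ' : ℝ → ℝ := fun x => ρ (max x a) with hρ''
  have hρ'c : Continuous ρ' :=
    hρc.comp_continuous (continuous_id.max continuous_const) (fun x => mem_Ici.mpr (le_max_right _ _))
  have hρ'pos : ∀ x, 0 < ρ' x := fun x => hρpos _ (mem_Ici.mpr (le_max_right _ _))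
  have hρ'eq : ∀ x ∈ Ici a, ρ' x = ρ x := fun x hx => by
    simp only [hρ'']; rw [max_eq_left hx]
  set R : ℝ → ℝ := fun x => ∫ t in a..x, ρ' t with hR'
  have hRd : ∀ x : ℝ, HasDerivAt R (ρ' x) x := by
    intro x
    exact (intervalIntegral.integral_hasStrictDerivAt_right
      (hρ'c.intervalIntegrable a x)
      (hρ'c.stronglyMeasurable.stronglyMeasurableAtFilter)
      hρ'c.continuousAt).hasDerivAt
  -- H(φ x) - R x is constant on Ici a
  have key : ∀ x ∈ Ici a, H (φ x) - R x = H (φ a) := by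
    intro x hx
    have hcst := constant_of_has_deriv_right_zero (f := fun t => H (φ t) - R t) (a := a) (b := x)
      (fun t ht => by
        exact (((hH (φ t)).comp t (hφ t (mem_Ici.mpr ht.1))).sub (hRd t)).continuousAt.continuousWithinAt)
      (fun t ht => by
        have hd : HasDerivAt (fun t => H (φ t) - R t) 0 t := by
          have h1 := ((hH (φ t)).comp t (hφ t (mem_Ici.mpr ht.1))).sub (hRd t)
          have : 1 / (A * sin (φ t) ^ 2 + cos (φ t) * sin (φ t) + B * cos (φ t) ^ 2) *
              (ρ t * (A * sin (φ t) ^ 2 + cos (φ t) * sin (φ t) + B * cos (φ t) ^ 2)) - ρ' t = 0 := by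
            rw [hρ'eq t (mem_Ici.mpr ht.1)]
            rw [div_mul_eq_mul_div, one_mul, mul_div_assoc, div_self (hFpos (φ t)).ne', mul_one, sub_self]
          rwa [this] at h1
        exact hd.hasDerivWithinAt)
    have h6 := hcst x (mem_Icc.mpr ⟨hx, le_refl x⟩)
    have hRa : R a = 0 := by simp [hR']
    linarith [h6, hRa]
  -- R is monotone
  have hRmono : Monotone R := by
    intro x y hxy
    have h1 : R y - R x = ∫ t in x..y, ρ' t := by
      have h7 : (∫ t in a..x, ρ' t) + ∫ t in x..y, ρ' t = ∫ t in a..y, ρ' t :=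
        intervalIntegral.integral_add_adjacent_intervals
          (hρ'c.intervalIntegrable a x) (hρ'c.intervalIntegrable x y)
      simp only [hR']
      linarith [h7]
    have h2 : 0 ≤ ∫ t in x..y, ρ' t :=
      intervalIntegral.integral_nonneg hxy (fun u _ => (hρ'pos u).le)
    linarith
  -- R tends to infinity
  have hRtop : Filter.Tendsto R Filter.atTop Filter.atTop := by
    apply Filter.tendsto_atTop_atTop_of_monotone' hRmono
    intro hbdd
    obtain ⟨M, hM⟩ := hbdd
    apply hρnonint
    rw [integrableOn_Ici_iff_integrableOn_Ioi]
    apply MeasureTheory.integrableOn_Ioi_of_intervalIntegral_norm_bounded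
      (b := fun i : ℝ => i) (l := Filter.atTop) M a
    · intro i
      exact ((hρc.mono (Icc_subset_Ici_self)).integrableOn_Icc).mono_set Ioc_subset_Icc_self
    · exact Filter.tendsto_id
    · filter_upwards [Filter.eventually_ge_atTop a] with i hi
      have he : ∀ t ∈ uIcc a i, ‖ρ t‖ = ρ' t := by
        intro t ht
        rw [uIcc_of_le hi] at ht
        rw [hρ'eq t (mem_Ici.mpr ht.1), Real.norm_eq_abs, abs_of_pos (hρpos t (mem_Ici.mpr ht.1))]
      calc (∫ t in a..i, ‖ρ t‖) = ∫ t in a..i, ρ' t := intervalIntegral.integral_congr he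
        _ = R i := rfl
        _ ≤ M := hM (mem_range_self i)
  -- φ tends to infinity
  have hKey2 : ∀ᶠ x in Filter.atTop, H (φ x) = R x + H (φ a) := by
    filter_upwards [Filter.eventually_ge_atTop a] with x hx
    have := key x (mem_Ici.mpr hx)
    linarith
  have hφtop : Filter.Tendsto φ Filter.atTop Filter.atTop := by
    have hlow : ∀ᶠ x in Filter.atTop, D * (R x + H (φ a)) - π/2 ≤ φ x := by
      filter_upwards [hKey2] with x hx
      have h1 := hHb (φ x)
      rw [abs_le] at h1
      have h2 : H (φ x) ≤ φ x / D + (1/D) * (π/2) := by linarith [h1.2]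
      rw [hx] at h2
      have h3 : D * (R x + H (φ a)) ≤ φ x + D * ((1/D) * (π/2)) := by
        have := mul_le_mul_of_nonneg_left h2 hD.le
        calc D * (R x + H (φ a)) ≤ D * (φ x / D + (1/D) * (π/2)) := this
          _ = φ x + D * ((1/D) * (π/2)) := by field_simp
      have h4 : D * ((1/D) * (π/2)) = π/2 := by field_simp
      linarith
    apply Filter.tendsto_atTop_mono' _ hlow
    apply Filter.tendsto_atTop_add_const_right
    apply Filter.Tendsto.const_mul_atTop hD
    exact Filter.tendsto_atTop_add_const_right _ _ hRtop
  -- the error term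
  set e : ℝ → ℝ := fun x => R x - φ x / D with he'
  have heb : ∀ᶠ x in Filter.atTop, |e x| ≤ (1/D) * (π/2) + |H (φ a)| := by
    filter_upwards [hKey2] with x hx
    have h1 := hHb (φ x)
    have h2 : e x = (H (φ x) - φ x / D) - H (φ a) := by rw [he', hx]; ring
    calc |e x| = |(H (φ x) - φ x / D) - H (φ a)| := by rw [h2]
      _ ≤ |H (φ x) - φ x / D| + |H (φ a)| := abs_sub _ _
      _ ≤ (1/D) * (π/2) + |H (φ a)| := by linarith
  -- D * e x / φ x → 0
  have hφpos : ∀ᶠ x in Filter.atTop, 0 < φ x := hφtop.eventually_gt_atTop 0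
  have hRpos : ∀ᶠ x in Filter.atTop, 0 < R x := hRtop.eventually_gt_atTop 0
  set C₀ : ℝ := D * ((1/D) * (π/2) + |H (φ a)|) with hC₀'
  have hquot : Filter.Tendsto (fun x => D * e x / φ x) Filter.atTop (nhds 0) := by
    have hC : Filter.Tendsto (fun x => C₀ / φ x) Filter.atTop (nhds 0) :=
      Filter.Tendsto.div_atTop tendsto_const_nhds hφtop
    have hCn : Filter.Tendsto (fun x => -(C₀ / φ x)) Filter.atTop (nhds 0) := by
      simpa using hC.neg
    apply tendsto_of_tendsto_of_tendsto_of_le_of_le' hCn hC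
    · filter_upwards [heb, hφpos] with x hex hpx
      have h1 : |D * e x| ≤ C₀ := by
        rw [abs_mul, abs_of_pos hD, hC₀']
        exact mul_le_mul_of_nonneg_left hex hD.le
      rw [abs_le] at h1
      rw [← neg_div]
      exact (div_le_div_iff_of_pos_right hpx).mpr h1.1
    · filter_upwards [heb, hφpos] with x hex hpx
      have h1 : |D * e x| ≤ C₀ := by
        rw [abs_mul, abs_of_pos hD, hC₀']
        exact mul_le_mul_of_nonneg_left hex hD.le
      rw [abs_le] at h1
      exact (div_le_div_iff_of_pos_right hpx).mpr h1.2
  -- conclusion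
  have hone : Filter.Tendsto (fun x => 1 + D * e x / φ x) Filter.atTop (nhds 1) := by
    simpa using (tendsto_const_nhds (x := (1:ℝ))).add hquot
  have hfin : Filter.Tendsto (fun x => D / (1 + D * e x / φ x)) Filter.atTop (nhds D) := by
    have h8 := (tendsto_const_nhds (x := D)).div hone one_ne_zero
    simpa only [div_one, Pi.div_def] using h8
  apply hfin.congr'
  filter_upwards [Filter.eventually_ge_atTop a, hφpos, hRpos] with x hx hpx hRx
  have hint : (∫ t in a..x, ρ t) = R x := by
    rw [hR']
    apply intervalIntegral.integral_congr
    intro t ht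
    rw [uIcc_of_le hx] at ht
    exact (hρ'eq t (mem_Ici.mpr ht.1)).symm
  have hDe : D * e x = D * R x - φ x := by
    rw [he']
    field_simp
  have h5 : 1 + D * e x / φ x = D * R x / φ x := by
    field_simp
    linarith [hDe]
  rw [hint, h5]
  rw [div_div_eq_mul_div, mul_div_mul_left _ _ hD.ne']
end

section
/- Suppose αⱼ are real numbers with ε_j^σ ≤ |2α_j − ⟨ω, m_j⟩| ≤ 2ε_j^σ whenever m_j ≠ 0, and |A_k| ≤ 32|α_k| N_k^τ when |α_k| ≥ (1/4)N_k^{-τ}. If m_l ≠ 0 and |A_{j+1} − (1 − ⟨ω,m_j⟩/(2α_j))A_j| ≤ ε_j^{2/3} and m_j = 0 for l < j < k, then |A_k| ≤ ∑_{j=l}^{k-1} ε_j^{2/3} + 2ε_l^σ |A_l/(2α_l)| ≤ 34 N_l^τ ε_l^σ, provided ε_l^{2/3} ≤ ε_l^σ N_l^τ and |A_l| ≤ 32|α_l|N_l^τ. -/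
open Matrix Finset

attribute [local instance] Matrix.frobeniusNormedAddCommGroup

attribute [local instance] Matrix.frobeniusNormedSpace

/-- Estimate on `‖A_k‖` after the last resonance: if `m_l ≠ 0`, `m_j = 0` for
`l < j < k`, with the KAM step estimates, then
`‖A_k‖ ≤ ∑_{j=l}^{k-1} ε_j^{2/3} + 2 ε_l^σ ‖A_l‖/(2|α_l|) ≤ 34 N_l^τ ε_l^σ`. -/
theorem Ak_norm_estimate (d : ℕ) (σ τ : ℝ) (hσ : 0 < σ) (hσ' : σ ≤ 2 / 3)
    (hτ : 0 < τ) (ε N : ℕ → ℝ) (α : ℕ → ℝ) (m : ℕ → Fin d → ℤ)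
    (ω : Fin d → ℝ) (A : ℕ → Matrix (Fin 2) (Fin 2) ℝ)
    (hε : ∀ j, 0 < ε j ∧ ε j < 1) (hεdec : ∀ j, ε (j + 1) ≤ ε j)
    (hN : ∀ j, 1 ≤ N j) (hα : ∀ j, α j ≠ 0)
    (l k : ℕ) (hlk : l < k)
    (hεsum : ∑ j ∈ Ico l k, ε j ^ ((2 : ℝ) / 3) ≤ 2 * ε l ^ ((2 : ℝ) / 3))
    (hml : m l ≠ 0) (hm0 : ∀ j, l < j → j < k → m j = 0)
    (hstep : ∀ j, l ≤ j → j < k →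
      ‖A (j + 1) - (1 - (∑ i, ω i * (m j i : ℝ)) / (2 * α j)) • A j‖
        ≤ ε j ^ ((2 : ℝ) / 3))
    (hres₁ : ε l ^ σ ≤ |2 * α l - ∑ i, ω i * (m l i : ℝ)|)
    (hres₂ : |2 * α l - ∑ i, ω i * (m l i : ℝ)| ≤ 2 * ε l ^ σ)
    (hAl : ‖A l‖ ≤ 32 * |α l| * N l ^ τ)
    (hεNτ : ε l ^ ((2 : ℝ) / 3) ≤ ε l ^ σ * N l ^ τ) :
    ‖A k‖ ≤ ∑ j ∈ Ico l k, ε j ^ ((2 : ℝ) / 3)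
        + 2 * ε l ^ σ * (‖A l‖ / (2 * |α l|)) ∧
    ‖A k‖ ≤ 34 * N l ^ τ * ε l ^ σ := by
  have hαl : (0 : ℝ) < |α l| := abs_pos.mpr (hα l)
  have hεl : 0 < ε l := (hε l).1
  have hεσ : 0 < ε l ^ σ := Real.rpow_pos_of_pos hεl σ
  have hNτ : (0 : ℝ) < N l ^ τ := Real.rpow_pos_of_pos (lt_of_lt_of_le one_pos (hN l)) τ
  -- bound on ‖A (l+1)‖
  set c : ℝ := ∑ i, ω i * (m l i : ℝ) with hc
  have hstepl := hstep l le_rfl hlk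
  have hcoef : |1 - c / (2 * α l)| ≤ 2 * ε l ^ σ / (2 * |α l|) := by
    have h2α : (2 * α l) ≠ 0 := mul_ne_zero two_ne_zero (hα l)
    have : 1 - c / (2 * α l) = (2 * α l - c) / (2 * α l) := by rw [sub_div, div_self h2α]
    rw [this, abs_div, abs_mul, abs_two]
    apply div_le_div_of_nonneg_right hres₂ (by positivity)
  have hAl1 : ‖A (l + 1)‖ ≤ ε l ^ ((2 : ℝ) / 3) + 2 * ε l ^ σ * (‖A l‖ / (2 * |α l|)) := by
    have h1 : ‖A (l + 1)‖ ≤ ‖A (l + 1) - (1 - c / (2 * α l)) • A l‖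
        + ‖(1 - c / (2 * α l)) • A l‖ := by
      have := norm_sub_norm_le (A (l + 1)) ((1 - c / (2 * α l)) • A l)
      linarith [norm_add_le (A (l + 1) - (1 - c / (2 * α l)) • A l) ((1 - c / (2 * α l)) • A l),
        sub_add_cancel (A (l + 1)) ((1 - c / (2 * α l)) • A l)]
    have h2 : ‖(1 - c / (2 * α l)) • A l‖ = |1 - c / (2 * α l)| * ‖A l‖ := by
      rw [norm_smul, Real.norm_eq_abs]
    have h3 : |1 - c / (2 * α l)| * ‖A l‖ ≤ (2 * ε l ^ σ / (2 * |α l|)) * ‖A l‖ :=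
      mul_le_mul_of_nonneg_right hcoef (norm_nonneg _)
    have h4 : (2 * ε l ^ σ / (2 * |α l|)) * ‖A l‖ = 2 * ε l ^ σ * (‖A l‖ / (2 * |α l|)) := by
      ring
    calc ‖A (l + 1)‖ ≤ _ + _ := h1
      _ ≤ ε l ^ ((2 : ℝ) / 3) + 2 * ε l ^ σ * (‖A l‖ / (2 * |α l|)) := by
          rw [h2]; rw [h4] at h3; linarith [hstepl]
  -- induction from l+1 to k
  have key : ∀ j, l + 1 ≤ j → j ≤ k →
      ‖A j‖ ≤ ‖A (l + 1)‖ + ∑ i ∈ Ico (l + 1) j, ε i ^ ((2 : ℝ) / 3) := by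
    intro j hj
    induction j, hj using Nat.le_induction with
    | base => intro _; simp
    | succ j hj ih =>
      intro hjk
      have hjk' : j < k := Nat.lt_of_succ_le hjk
      have ihj := ih (le_of_lt hjk')
      have hm : m j = 0 := hm0 j (Nat.lt_of_succ_le hj) hjk'
      have hs := hstep j (le_of_lt (Nat.lt_of_succ_le hj)) hjk'
      rw [hm] at hs
      simp only [Int.cast_zero, Pi.zero_apply, mul_zero, Finset.sum_const_zero,
        zero_div, sub_zero, one_smul] at hs
      have tri : ‖A (j + 1)‖ ≤ ‖A j‖ + ε j ^ ((2 : ℝ) / 3) := by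
        have := norm_sub_norm_le (A (j + 1)) (A j)
        linarith
      rw [Finset.sum_Ico_succ_top hj]
      linarith
  have hk := key k (Nat.succ_le_of_lt hlk) le_rfl
  have hsplit : ∑ j ∈ Ico l k, ε j ^ ((2 : ℝ) / 3)
      = ε l ^ ((2 : ℝ) / 3) + ∑ j ∈ Ico (l + 1) k, ε j ^ ((2 : ℝ) / 3) :=
    Finset.sum_eq_sum_Ico_succ_bot hlk _
  have part1 : ‖A k‖ ≤ ∑ j ∈ Ico l k, ε j ^ ((2 : ℝ) / 3)
      + 2 * ε l ^ σ * (‖A l‖ / (2 * |α l|)) := by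
    rw [hsplit]; linarith
  refine ⟨part1, ?_⟩
  have hb1 : ‖A l‖ / (2 * |α l|) ≤ 16 * N l ^ τ := by
    rw [div_le_iff₀ (by positivity)]
    calc ‖A l‖ ≤ 32 * |α l| * N l ^ τ := hAl
      _ = 16 * N l ^ τ * (2 * |α l|) := by ring
  have hb2 : 2 * ε l ^ σ * (‖A l‖ / (2 * |α l|)) ≤ 32 * ε l ^ σ * N l ^ τ := by
    have := mul_le_mul_of_nonneg_left hb1 (le_of_lt (by positivity : (0:ℝ) < 2 * ε l ^ σ))
    linarith
  calc ‖A k‖ ≤ _ := part1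
    _ ≤ 2 * ε l ^ ((2 : ℝ) / 3) + 32 * ε l ^ σ * N l ^ τ := by linarith
    _ ≤ 2 * (ε l ^ σ * N l ^ τ) + 32 * ε l ^ σ * N l ^ τ := by linarith
    _ = 34 * N l ^ τ * ε l ^ σ := by ring
end

section
/- Let φ : [a,∞) → ℝ be C¹ with φ'(x) = (1/x)(sin²φ + cos φ sin φ + μK cos²φ) + O(1/x²) where μK > 1/4 (constants μK real). Then φ(x) = ((1/2)√(4μK − 1) + o(1)) log x as x → ∞. -/
open Real Filter MeasureTheory Set

noncomputable def pF (c θ : ℝ) : ℝ := sin θ ^ 2 + cos θ * sin θ + c * cos θ ^ 2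

lemma pF_cont (c : ℝ) : Continuous (pF c) := by unfold pF; continuity

lemma pF_lower {c : ℝ} (hc : 1/4 < c) (θ : ℝ) :
    (4*c-1)/(4*(c+1)) ≤ pF c θ := by
  have h := sin_sq_add_cos_sq θ
  have hc1 : (0:ℝ) < 4*(c+1) := by linarith
  rw [div_le_iff₀ hc1, pF]
  nlinarith [sq_nonneg (5*sin θ + 2*(c+1)*cos θ), sq_nonneg ((4*c-1)*cos θ)]

lemma pm_pos {c : ℝ} (hc : 1/4 < c) : 0 < (4*c-1)/(4*(c+1)) := by
  apply div_pos <;> linarith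

lemma pF_pos {c : ℝ} (hc : 1/4 < c) (θ : ℝ) : 0 < pF c θ :=
  lt_of_lt_of_le (pm_pos hc) (pF_lower hc θ)

lemma pF_periodic (c : ℝ) : Function.Periodic (pF c) π := by
  intro θ; simp [pF, sin_add_pi, cos_add_pi]

lemma pFinv_cont {c : ℝ} (hc : 1/4 < c) : Continuous fun t => (pF c t)⁻¹ :=
  (pF_cont c).inv₀ fun θ => (pF_pos hc θ).ne'

noncomputable def pG (c θ : ℝ) : ℝ := ∫ t in (0:ℝ)..θ, (pF c t)⁻¹

lemma pG_hasDeriv {c : ℝ} (hc : 1/4 < c) (θ : ℝ) :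
    HasDerivAt (pG c) (pF c θ)⁻¹ θ := by
  have hcont := pFinv_cont hc
  exact intervalIntegral.integral_hasDerivAt_right
    (hcont.intervalIntegrable _ _)
    (hcont.stronglyMeasurableAtFilter _ _)
    hcont.continuousAt



lemma pG_mono {c : ℝ} (hc : 1/4 < c) : StrictMono (pG c) :=
  strictMono_of_deriv_pos fun x => by
    rw [(pG_hasDeriv hc x).deriv]; exact inv_pos.mpr (pF_pos hc x)

lemma pG_zero (c : ℝ) : pG c 0 = 0 := intervalIntegral.integral_same

lemma pG_pos {c : ℝ} (hc : 1/4 < c) : 0 < pG c π := by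
  rw [← pG_zero c]; exact pG_mono hc pi_pos

lemma pG_le_max {c : ℝ} (hc : 1/4 < c) (θ : ℝ) :
    (4*c-1)/(4*(c+1)) * pG c θ ≤ max θ 0 := by
  set m := (4*c-1)/(4*(c+1)) with hm
  have hmpos := pm_pos hc
  rcases le_or_gt 0 θ with hθ | hθ
  · have h1 : pG c θ ≤ ∫ t in (0:ℝ)..θ, m⁻¹ := by
      apply intervalIntegral.integral_mono_on hθ
        ((pFinv_cont hc).intervalIntegrable _ _) (intervalIntegrable_const)
      intro x _
      exact inv_anti₀ hmpos (pF_lower hc x)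
    rw [intervalIntegral.integral_const, smul_eq_mul, sub_zero] at h1
    rw [max_eq_left hθ]
    calc m * pG c θ ≤ m * (θ * m⁻¹) := by
          exact mul_le_mul_of_nonneg_left h1 hmpos.le
      _ = θ := by have hm0 : m ≠ 0 := hmpos.ne'; field_simp
  · have h1 : pG c θ ≤ 0 := by
      rw [← pG_zero c]
      exact (pG_mono hc hθ).le
    rw [max_eq_right hθ.le]
    exact mul_nonpos_of_nonneg_of_nonpos hmpos.le h1

lemma pG_add_pi {c : ℝ} (hc : 1/4 < c) (θ : ℝ) :
    pG c (θ + π) = pG c θ + pG c π := by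
  have hper : Function.Periodic (fun t => (pF c t)⁻¹) π := fun t => by
    simp [pF_periodic c t]
  have h1 : (∫ t in θ..θ+π, (pF c t)⁻¹) = ∫ t in (0:ℝ)..0+π, (pF c t)⁻¹ :=
    hper.intervalIntegral_add_eq θ 0
  have h2 : pG c θ + ∫ t in θ..θ+π, (pF c t)⁻¹ = pG c (θ + π) :=
    intervalIntegral.integral_add_adjacent_intervals
      ((pFinv_cont hc).intervalIntegrable _ _) ((pFinv_cont hc).intervalIntegrable _ _)
  rw [← h2, h1]; simp [pG]

lemma pG_nat {c : ℝ} (hc : 1/4 < c) (n : ℕ) :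
    pG c (n * π) = n * pG c π := by
  induction n with
  | zero => simp [pG_zero]
  | succ k ih =>
      have : ((k:ℝ)+1) * π = k * π + π := by ring
      push_cast
      rw [this, pG_add_pi hc, ih]; ring

lemma pG_linear {c : ℝ} (hc : 1/4 < c) (θ : ℝ) (hθ : 0 ≤ θ) :
    |pG c θ - (pG c π / π) * θ| ≤ pG c π := by
  set T := pG c π with hT
  have hTpos := pG_pos hc
  set n := ⌊θ / π⌋₊ with hn
  have h1 : (n:ℝ) * π ≤ θ := by
    rw [hn]
    calc (⌊θ / π⌋₊ : ℝ) * π ≤ (θ/π) * π :=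
          mul_le_mul_of_nonneg_right (Nat.floor_le (by positivity)) pi_pos.le
      _ = θ := by field_simp
  have h2 : θ < ((n:ℝ)+1) * π := by
    rw [hn]
    have := Nat.lt_floor_add_one (θ / π)
    calc θ = (θ/π)*π := by field_simp
      _ < ((⌊θ / π⌋₊:ℝ)+1) * π := by
          apply mul_lt_mul_of_pos_right _ pi_pos
          push_cast; exact this
  have h3 : (n:ℝ) * T ≤ pG c θ := by
    rw [← pG_nat hc]; exact (pG_mono hc).monotone h1
  have h4 : pG c θ ≤ ((n:ℝ)+1) * T := by
    have : pG c θ ≤ pG c (((n:ℝ)+1) * π) := (pG_mono hc).monotone h2.le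
    have h5 : pG c (((n:ℝ)+1)*π) = ((n:ℝ)+1)*T := by
      have := pG_nat hc (n+1); push_cast at this ⊢; linarith [this]
    linarith
  have h6 : (n:ℝ) * T ≤ (T/π) * θ := by
    rw [div_mul_eq_mul_div, le_div_iff₀ pi_pos]
    calc (n:ℝ)*T*π = ((n:ℝ)*π)*T := by ring
      _ ≤ θ * T := mul_le_mul_of_nonneg_right h1 hTpos.le
      _ = T * θ := by ring
  have h7 : (T/π) * θ ≤ ((n:ℝ)+1) * T := by
    rw [div_mul_eq_mul_div, div_le_iff₀ pi_pos]
    calc T * θ ≤ T * (((n:ℝ)+1)*π) := mul_le_mul_of_nonneg_left h2.le hTpos.le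
      _ = ((n:ℝ)+1)*T*π := by ring
  rw [abs_le]; constructor <;> linarith

lemma pG_ratio {c : ℝ} (hc : 1/4 < c) :
    Tendsto (fun θ => pG c θ / θ) atTop (nhds (pG c π / π)) := by
  have h0 : Tendsto (fun θ : ℝ => pG c π / θ) atTop (nhds 0) :=
    tendsto_const_nhds.div_atTop tendsto_id
  have h1 : Tendsto (fun θ => pG c θ / θ - pG c π / π) atTop (nhds 0) := by
    apply squeeze_zero_norm' _ h0
    filter_upwards [eventually_ge_atTop (1:ℝ)] with θ hθ
    have hθ0 : (0:ℝ) < θ := by linarith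
    have : pG c θ / θ - pG c π / π = (pG c θ - (pG c π / π) * θ) / θ := by
      field_simp
    rw [this, Real.norm_eq_abs, abs_div, abs_of_pos hθ0]
    gcongr
    exact pG_linear hc θ hθ0.le
  have := h1.add_const (pG c π / π)
  simpa using this



lemma pG_pi {c : ℝ} (hc : 1/4 < c) :
    pG c π = π / (Real.sqrt (4*c-1) / 2) := by
  obtain ⟨ω, hω, hω2, hωeq⟩ : ∃ ω : ℝ, 0 < ω ∧ ω^2 = c - 1/4 ∧ Real.sqrt (4*c-1)/2 = ω := by
    refine ⟨Real.sqrt (4*c-1)/2, ?_, ?_, rfl⟩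
    · exact div_pos (Real.sqrt_pos.mpr (by linarith)) two_pos
    · rw [div_pow, Real.sq_sqrt (by linarith : (0:ℝ) ≤ 4*c-1)]; ring
  rw [hωeq]
  have hper : Function.Periodic (fun t => (pF c t)⁻¹) π := fun t => by
    simp [pF_periodic c t]
  have hshift : pG c π = ∫ t in (-(π/2))..(-(π/2)+π), (pF c t)⁻¹ := by
    rw [hper.intervalIntegral_add_eq (-(π/2)) 0]
    simp [pG]
  have hhalf : -(π/2)+π = π/2 := by ring
  rw [hshift, hhalf]
  set H : ℝ → ℝ := fun θ => ω⁻¹ * arctan ((tan θ + 1/2)/ω) with hH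
  have hderiv : ∀ x ∈ Ioo (-(π/2)) (π/2), HasDerivAt H (pF c x)⁻¹ x := by
    intro x hx
    have hcos : 0 < cos x := cos_pos_of_mem_Ioo hx
    have h1 : HasDerivAt (fun θ => (tan θ + 1/2)/ω) ((1 / cos x ^ 2)/ω) x :=
      ((hasDerivAt_tan hcos.ne').add_const _).div_const ω
    have h2 := (hasDerivAt_arctan ((tan x + 1/2)/ω)).comp x h1
    have h3 := h2.const_mul ω⁻¹
    refine h3.congr_deriv ?_
    symm
    have htan : tan x = sin x / cos x := tan_eq_sin_div_cos x
    have hpyth := sin_sq_add_cos_sq x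
    have hc' : c = ω^2 + 1/4 := by linarith
    have hu : (0:ℝ) < 1 + ((tan x + 1/2)/ω)^2 := by positivity
    have key : ω^2 * cos x^2 * (1 + ((tan x + 1/2)/ω)^2) = pF c x := by
      rw [htan, pF, hc']; field_simp; ring
    rw [← key]
    field_simp
  have hint : IntervalIntegrable (fun t => (pF c t)⁻¹) volume (-(π/2)) (π/2) :=
    (pFinv_cont hc).intervalIntegrable _ _
  have hb : Tendsto H (nhdsWithin (π/2) (Iio (π/2))) (nhds (ω⁻¹ * (π/2))) := by
    apply Tendsto.const_mul
    have h1 : Tendsto (fun θ => (tan θ + 1/2)/ω) (nhdsWithin (π/2) (Iio (π/2))) atTop := by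
      apply Tendsto.atTop_div_const hω
      exact tendsto_atTop_add_const_right _ _ tendsto_tan_pi_div_two
    exact (tendsto_arctan_atTop.mono_right nhdsWithin_le_nhds).comp h1
  have ha : Tendsto H (nhdsWithin (-(π/2)) (Ioi (-(π/2)))) (nhds (ω⁻¹ * (-(π/2)))) := by
    apply Tendsto.const_mul
    have h1 : Tendsto (fun θ => (tan θ + 1/2)/ω) (nhdsWithin (-(π/2)) (Ioi (-(π/2)))) atBot := by
      apply Tendsto.atBot_div_const hω
      exact tendsto_atBot_add_const_right _ _ tendsto_tan_neg_pi_div_two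
    exact (tendsto_arctan_atBot.mono_right nhdsWithin_le_nhds).comp h1
  rw [intervalIntegral.integral_eq_sub_of_hasDerivAt_of_tendsto
    (by linarith [pi_pos] : -(π/2) < π/2) hderiv hint ha hb]
  field_simp
  ring



/-- If `φ' = (1/x)(sin²φ + cosφ sinφ + c cos²φ) + O(1/x²)` with `c > 1/4`, then
`φ(x) = ((1/2)√(4c−1) + o(1)) log x`, i.e. `φ(x)/log x → √(4c−1)/2`. -/
theorem prufer_log_asymptotics (a : ℝ) (ha : 1 < a) (c : ℝ) (hc : 1 / 4 < c)
    (φ : ℝ → ℝ) (hφdiff : ∀ x ∈ Set.Ici a, DifferentiableAt ℝ φ x)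
    (C : ℝ) (hC : 0 < C)
    (hφ : ∀ x ∈ Set.Ici a,
      |deriv φ x - (1 / x) * (sin (φ x) ^ 2 + cos (φ x) * sin (φ x)
        + c * cos (φ x) ^ 2)| ≤ C / x ^ 2) :
    Filter.Tendsto (fun x => φ x / Real.log x) Filter.atTop
      (nhds (Real.sqrt (4 * c - 1) / 2)) := by
  have ha0 : (0:ℝ) < a := by linarith
  set m : ℝ := (4*c-1)/(4*(c+1)) with hmdef
  have hm : 0 < m := pm_pos hc
  set K : ℝ := C / m with hKdef
  have hK : 0 < K := div_pos hC hm
  set ψ : ℝ → ℝ := fun x => pG c (φ x) with hψdef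
  set T : ℝ := pG c π with hTdef
  have hTpos : 0 < T := pG_pos hc
  -- derivative of ψ
  have hψd : ∀ x ∈ Ici a, HasDerivAt ψ ((pF c (φ x))⁻¹ * deriv φ x) x := by
    intro x hx
    exact (pG_hasDeriv hc (φ x)).comp x (hφdiff x hx).hasDerivAt
  -- bound on deviation of ψ' from 1/x
  have hψb : ∀ x ∈ Ici a, |(pF c (φ x))⁻¹ * deriv φ x - 1/x| ≤ K / x^2 := by
    intro x hx
    have hxpos : 0 < x := lt_of_lt_of_le ha0 hx
    have hFp := pF_pos hc (φ x)
    have heq : (pF c (φ x))⁻¹ * deriv φ x - 1/x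
        = (pF c (φ x))⁻¹ * (deriv φ x - (1/x) * pF c (φ x)) := by
      field_simp
    rw [heq, abs_mul, abs_of_pos (inv_pos.mpr hFp)]
    have h1 : (pF c (φ x))⁻¹ ≤ m⁻¹ := inv_anti₀ hm (pF_lower hc (φ x))
    have h2 : |deriv φ x - 1/x * pF c (φ x)| ≤ C / x^2 := hφ x hx
    calc (pF c (φ x))⁻¹ * |deriv φ x - 1/x * pF c (φ x)|
        ≤ m⁻¹ * (C / x^2) := by
          apply mul_le_mul h1 h2 (abs_nonneg _) (inv_pos.mpr hm).le
      _ = K / x^2 := by rw [hKdef]; field_simp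
  -- auxiliary comparison functions
  have hwd : ∀ (s : ℝ) (x : ℝ), x ∈ Ici a →
      HasDerivAt (fun y => ψ y - Real.log y + s * y⁻¹)
        ((pF c (φ x))⁻¹ * deriv φ x - x⁻¹ + s * (-(x^2)⁻¹)) x := by
    intro s x hx
    have hxpos : 0 < x := lt_of_lt_of_le ha0 hx
    exact ((hψd x hx).sub (Real.hasDerivAt_log hxpos.ne')).add
      ((hasDerivAt_inv hxpos.ne').const_mul s)
  -- upper comparison: ψ x - log x + K/x is antitone on Ici a
  have hanti : AntitoneOn (fun y => ψ y - Real.log y + K * y⁻¹) (Ici a) := by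
    apply antitoneOn_of_deriv_nonpos (convex_Ici a)
    · exact fun x hx => ((hwd K x hx).continuousAt).continuousWithinAt
    · intro x hx
      rw [interior_Ici] at hx
      exact ((hwd K x (Set.mem_Ici.mpr (le_of_lt hx))).differentiableAt).differentiableWithinAt
    · intro x hx
      rw [interior_Ici] at hx
      have hx' : x ∈ Ici a := Set.mem_Ici.mpr (le_of_lt hx)
      rw [(hwd K x hx').deriv]
      have hxpos : 0 < x := lt_of_lt_of_le ha0 hx'
      have h2 := (abs_le.mp (hψb x hx')).2
      rw [one_div, div_eq_mul_inv] at h2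
      linarith
  -- lower comparison: ψ x - log x - K/x is monotone on Ici a
  have hmono : MonotoneOn (fun y => ψ y - Real.log y + (-K) * y⁻¹) (Ici a) := by
    apply monotoneOn_of_deriv_nonneg (convex_Ici a)
    · exact fun x hx => ((hwd (-K) x hx).continuousAt).continuousWithinAt
    · intro x hx
      rw [interior_Ici] at hx
      exact ((hwd (-K) x (Set.mem_Ici.mpr (le_of_lt hx))).differentiableAt).differentiableWithinAt
    · intro x hx
      rw [interior_Ici] at hx
      have hx' : x ∈ Ici a := Set.mem_Ici.mpr (le_of_lt hx)
      rw [(hwd (-K) x hx').deriv]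
      have h2 := (abs_le.mp (hψb x hx')).1
      rw [one_div, div_eq_mul_inv] at h2
      linarith
  -- global bound |ψ x - log x| ≤ B on Ici a
  set B : ℝ := |ψ a - Real.log a| + K / a with hBdef
  have hB : ∀ x ∈ Ici a, |ψ x - Real.log x| ≤ B := by
    intro x hx
    have hxpos : 0 < x := lt_of_lt_of_le ha0 hx
    have hKx : 0 < K * x⁻¹ := mul_pos hK (inv_pos.mpr hxpos)
    have hKa : K * a⁻¹ = K / a := by rw [div_eq_mul_inv]
    have h1 := hanti (self_mem_Ici) hx hx
    have h2 := hmono (self_mem_Ici) hx hx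
    simp only at h1 h2
    have habs := abs_le.mp (le_refl |ψ a - Real.log a|)
    have h3 := neg_abs_le (ψ a - Real.log a)
    have h4 := le_abs_self (ψ a - Real.log a)
    rw [abs_le]
    constructor
    · rw [hBdef]; nlinarith
    · rw [hBdef]; nlinarith
  -- ψ / log → 1
  have hψlog : Tendsto (fun x => ψ x / Real.log x) atTop (nhds 1) := by
    have h0 : Tendsto (fun x : ℝ => B / Real.log x) atTop (nhds 0) :=
      tendsto_const_nhds.div_atTop Real.tendsto_log_atTop
    have h1 : Tendsto (fun x => ψ x / Real.log x - 1) atTop (nhds 0) := by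
      apply squeeze_zero_norm' _ h0
      filter_upwards [eventually_ge_atTop a] with x hx
      have hlog : 0 < Real.log x := Real.log_pos (lt_of_lt_of_le ha hx)
      have heq : ψ x / Real.log x - 1 = (ψ x - Real.log x) / Real.log x := by
        field_simp
      rw [heq, Real.norm_eq_abs, abs_div, abs_of_pos hlog]
      gcongr
      exact hB x hx
    have := h1.add_const 1
    simpa using this
  -- ψ → ∞
  have hψtop : Tendsto ψ atTop atTop := by
    have hev : (fun x => Real.log x + (-B)) ≤ᶠ[atTop] ψ := by
      filter_upwards [eventually_ge_atTop a] with x hx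
      have := (abs_le.mp (hB x hx)).1
      show Real.log x + (-B) ≤ ψ x
      linarith
    exact tendsto_atTop_mono' atTop hev
      (tendsto_atTop_add_const_right _ (-B) Real.tendsto_log_atTop)
  -- φ → ∞
  have hφtop : Tendsto φ atTop atTop := by
    rw [tendsto_atTop]
    intro b
    filter_upwards [hψtop.eventually_ge_atTop (max b 1 / m)] with x hx
    have h1 : max b 1 ≤ m * ψ x := by
      rw [← div_le_iff₀' hm]; exact hx
    have h2 : m * ψ x ≤ max (φ x) 0 := pG_le_max hc (φ x)
    have h3 : max b 1 ≤ max (φ x) 0 := le_trans h1 h2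
    rcases le_max_iff.mp h3 with h | h
    · linarith [le_max_left b 1]
    · linarith [le_max_right b 1]
  -- compose ratio limit
  have hcomp : Tendsto (fun x => ψ x / φ x) atTop (nhds (T / π)) :=
    (pG_ratio hc).comp hφtop
  have hTπ : T / π ≠ 0 := ne_of_gt (div_pos hTpos pi_pos)
  have hinv : Tendsto (fun x => φ x / ψ x) atTop (nhds (π / T)) := by
    simpa only [inv_div] using hcomp.inv₀ hTπ
  -- final assembly
  have hfin : Tendsto (fun x => φ x / Real.log x) atTop (nhds (π / T * 1)) := by
    apply (hinv.mul hψlog).congr'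
    filter_upwards [hψtop.eventually_gt_atTop 0] with x hx
    have hψne : ψ x ≠ 0 := ne_of_gt hx
    rw [div_mul_div_comm, mul_comm (φ x) (ψ x), mul_comm (ψ x) (Real.log x)]
    rw [mul_comm (Real.log x) (ψ x)] -- adjust
    exact (mul_div_mul_left (φ x) (Real.log x) hψne)
  have hval : π / T * 1 = Real.sqrt (4*c-1) / 2 := by
    rw [mul_one, hTdef, pG_pi hc, div_div_eq_mul_div, mul_comm, mul_div_assoc,
      div_self pi_ne_zero, mul_one]
  rw [← hval]
  exact hfin
end
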